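/- arXiv:1809.00162 — 3 statements merged into one kernel-verified Lean document; each statement's English description precedes it below -/
import Mathlib

section
/- For a hypergraph H with no repeated hyperedge and range k_max, with layered e-adjacency tensor A_H of order k_max and dimension n + k_max - 1, for every j with 2 ≤ j ≤ k_max, the number of hyperedges of cardinality j equals d_{n+j} - d_{n+j-1}, where d_{n+i} denotes the degree of the special vertex y_i (with the convention d_{n+k_max} = |E|); moreover the number of hyperedges of cardinality 1 equals d_{n+1}. -/
lemma split_card {α : Type*} [DecidableEq α] (E : Finset (Finset α)) (j : ℕ) (hj : 1 ≤ j) :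
    (E.filter (fun e => e.card ≤ j)).card
      = (E.filter (fun e => e.card ≤ j - 1)).card + (E.filter (fun e => e.card = j)).card := by
  rw [← Finset.card_union_of_disjoint, ← Finset.filter_or]
  · congr 1
    ext e
    simp only [Finset.mem_filter, and_congr_right_iff]
    intro _
    omega
  · rw [Finset.disjoint_filter]
    intro e _ h1 h2
    omega

/-- With `d_{n+i} = deg(y_i) = |{e ∈ E : |e| ≤ i}|` the degrees of the special
vertices (and the convention `d_{n+k_max} = |E|`), the number of hyperedges of
cardinality `j` (for `2 ≤ j ≤ k_max`) equals `d_{n+j} - d_{n+j-1}`, and the number of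
hyperedges of cardinality `1` equals `d_{n+1}`. -/
theorem edge_counts_from_special_degrees {α : Type*} [DecidableEq α] (V : Finset α)
    (E : Finset (Finset α)) (hV : ∀ e ∈ E, e ⊆ V)
    (kmax : ℕ) (hkmax : 2 ≤ kmax)
    (hne : ∀ e ∈ E, 1 ≤ e.card) (hrange : ∀ e ∈ E, e.card ≤ kmax)
    (d : ℕ → ℕ)
    (hd : ∀ i, 1 ≤ i → i ≤ kmax - 1 → d i = (E.filter (fun e => e.card ≤ i)).card)
    (hdtop : d kmax = E.card) :
    (∀ j, 2 ≤ j → j ≤ kmax →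
      (E.filter (fun e => e.card = j)).card = d j - d (j - 1)) ∧
    (E.filter (fun e => e.card = 1)).card = d 1 := by
  have htop : (E.filter (fun e => e.card ≤ kmax)).card = E.card := by
    congr 1
    exact Finset.filter_true_of_mem hrange
  have hd' : ∀ i, 1 ≤ i → i ≤ kmax → d i = (E.filter (fun e => e.card ≤ i)).card := by
    intro i h1 h2
    rcases eq_or_lt_of_le h2 with rfl | h
    · rw [hdtop, htop]
    · exact hd i h1 (by omega)
  constructor
  · intro j hj2 hjk
    have h := split_card E j (by omega)
    rw [← hd' j (by omega) hjk, ← hd' (j-1) (by omega) (by omega)] at h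
    omega
  · have h := split_card E 1 le_rfl
    have h0 : (E.filter (fun e => e.card ≤ 1 - 1)).card = 0 := by
      rw [Finset.card_eq_zero, Finset.filter_eq_empty_iff]
      intro e he
      have := hne e he
      omega
    rw [← hd' 1 le_rfl (by omega)] at h
    omega
end

section
/- For the layered e-adjacency tensor A_H = (a_{i1...i_{k_max}}) of a hypergraph H with no repeated hyperedge, for every index i in 1, ..., n + k_max - 1, the sum of a_{i i2 ... i_{k_max}} over all (i2, ..., i_{k_max}) with pairwise distinct indices equals d_i, where d_i = deg(v_i) for i ≤ n and d_{n+i} = deg(y_i) for 1 ≤ i ≤ k_max - 1 (degrees taken in the V_s-layered uniform hypergraph). -/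
open Finset

-- count of injective g : Fin m → X with image = s, where s.card = m
lemma count_inj_image {X : Type*} [Fintype X] [DecidableEq X] (m : ℕ) (s : Finset X)
    (hs : s.card = m) :
    (Finset.univ.filter (fun g : Fin m → X => Function.Injective g ∧
      Finset.image g Finset.univ = s)).card = m.factorial := by
  rw [← Fintype.card_subtype]
  have e : {g : Fin m → X // Function.Injective g ∧ Finset.image g Finset.univ = s} ≃
      (Fin m ↪ s) := by
    refine ⟨fun g => ⟨fun j => ⟨g.1 j, ?_⟩, fun j k h => g.2.1 (Subtype.ext_iff.mp h)⟩,
      fun f => ⟨fun j => (f j : X), ?_, ?_⟩, fun g => rfl, fun f => rfl⟩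
    · have := Finset.mem_image_of_mem g.1 (Finset.mem_univ j); rwa [g.2.2] at this
    · exact fun j k h => f.injective (Subtype.ext h)
    · apply Finset.eq_of_subset_of_card_le
      · intro x hx
        obtain ⟨j, _, rfl⟩ := Finset.mem_image.mp hx
        exact (f j).2
      · rw [hs, Finset.card_image_of_injective _ (fun j k h => f.injective (Subtype.ext h)),
          Finset.card_univ, Fintype.card_fin]
  rw [Fintype.card_congr e, Fintype.card_embedding_eq, Fintype.card_coe, hs,
    Fintype.card_fin, Nat.descFactorial_self]

lemma filter_card_aux (m c : ℕ) :
    (Finset.univ.filter (fun i : Fin m => c ≤ i.1 + 1)).card = m - (c - 1) := by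
  have h : (Finset.univ.filter (fun i : Fin m => c ≤ i.1 + 1)).card
      = ((Finset.Iio m).filter (fun i => c ≤ i + 1)).card := by
    rw [← Fin.map_valEmbedding_univ, Finset.filter_map, Finset.card_map]
    rfl
  rw [h]
  have h2 : (Finset.Iio m).filter (fun i => c ≤ i + 1)
      = (Finset.Ico 0 m).filter (fun i => c - 1 ≤ i) := by
    rw [show Finset.Iio m = Finset.Ico 0 m from by rw [Nat.Iio_eq_range, Finset.range_eq_Ico]]
    exact Finset.filter_congr (fun x _ => by constructor <;> (intro; omega))
  rw [h2, Finset.Ico_filter_le, Nat.card_Ico]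
  omega

lemma ehat_edge_card {n m : ℕ} (e : Finset (Fin n)) (h1 : 1 ≤ e.card) (h2 : e.card ≤ m + 1) :
    (e.image Sum.inl ∪
      (Finset.univ.filter (fun i : Fin m => e.card ≤ i.1 + 1)).image Sum.inr).card = m + 1 := by
  rw [Finset.card_union_of_disjoint (by simp [Finset.disjoint_left]),
    Finset.card_image_of_injective _ Sum.inl_injective,
    Finset.card_image_of_injective _ Sum.inr_injective, filter_card_aux]
  omega

lemma image_cons_univ {X : Type*} [DecidableEq X] {m : ℕ} (v : X) (g : Fin m → X) :
    Finset.image (Fin.cons v g) Finset.univ = insert v (Finset.image g Finset.univ) := by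
  rw [Fin.univ_succ, Finset.cons_eq_insert, Finset.image_insert, Fin.cons_zero,
    Finset.map_eq_image, Finset.image_image]
  congr 1



/-- Row sums of the layered e-adjacency tensor are the degrees: for a hypergraph `H` on
`Fin n` with no repeated hyperedge and range `k_max = m + 1`, whose uniformisation `Ê`
(on the `n + m` vertices `Fin n ⊕ Fin m`, with `Sum.inr i` playing the role of the
special vertex `y_{i+1}`) consists of the hyperedges `ê = e ∪ {y_{|e|}, ..., y_m}`, the
layered e-adjacency tensor `a` (of order `m + 1`, entries `1/m!` at injective tuples
whose image is a hyperedge of `Ê`, `0` otherwise) satisfies: for every vertex `v`, the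
sum of `a` over tuples with first index `v` equals the degree of `v` in the
uniformised hypergraph. -/
theorem layered_tensor_rowsum (n m : ℕ) (E : Finset (Finset (Fin n)))
    (hne : ∀ e ∈ E, 1 ≤ e.card) (hrange : ∀ e ∈ E, e.card ≤ m + 1)
    (Ehat : Finset (Finset (Fin n ⊕ Fin m)))
    (hEhat : Ehat = E.image (fun e =>
      e.image Sum.inl ∪
        (Finset.univ.filter (fun i : Fin m => e.card ≤ i.1 + 1)).image Sum.inr))
    (a : (Fin (m + 1) → Fin n ⊕ Fin m) → ℝ)
    (ha : ∀ i, a i =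
      if Function.Injective i ∧ Finset.image i Finset.univ ∈ Ehat
      then 1 / (Nat.factorial m : ℝ) else 0) :
    ∀ v : Fin n ⊕ Fin m, ∑ g : Fin m → Fin n ⊕ Fin m, a (Fin.cons v g) =
      ((Ehat.filter (fun e => v ∈ e)).card : ℝ) := by
  classical
  intro v
  have hcard : ∀ e ∈ Ehat, e.card = m + 1 := by
    intro e he
    rw [hEhat] at he
    obtain ⟨e', he', rfl⟩ := Finset.mem_image.mp he
    exact ehat_edge_card e' (hne e' he') (hrange e' he')
  simp only [ha]
  rw [Finset.sum_ite, Finset.sum_const, Finset.sum_const_zero, add_zero, nsmul_eq_mul]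
  have hset : Finset.univ.filter (fun g : Fin m → Fin n ⊕ Fin m =>
        Function.Injective (Fin.cons v g) ∧ Finset.image (Fin.cons v g) Finset.univ ∈ Ehat)
      = (Ehat.filter (fun e => v ∈ e)).biUnion (fun e =>
          Finset.univ.filter (fun g : Fin m → Fin n ⊕ Fin m =>
            Function.Injective g ∧ Finset.image g Finset.univ = e.erase v)) := by
    ext g
    simp only [Finset.mem_filter, Finset.mem_univ, true_and, Finset.mem_biUnion]
    constructor
    · rintro ⟨hinj, hmem⟩
      rw [Fin.cons_injective_iff] at hinj
      refine ⟨_, ⟨hmem, ?_⟩, hinj.2, ?_⟩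
      · rw [image_cons_univ]; exact Finset.mem_insert_self _ _
      · rw [image_cons_univ, Finset.erase_insert]
        intro hv
        exact hinj.1 (by simpa [Set.mem_range] using Finset.mem_image.mp hv |>.imp (fun j h => h.2))
    · rintro ⟨e, ⟨he, hv⟩, hinj, himg⟩
      have hvr : v ∉ Set.range g := by
        intro ⟨j, hj⟩
        have : v ∈ Finset.image g Finset.univ := Finset.mem_image.mpr ⟨j, Finset.mem_univ j, hj⟩
        rw [himg] at this
        exact Finset.notMem_erase v e this
      refine ⟨Fin.cons_injective_iff.mpr ⟨hvr, hinj⟩, ?_⟩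
      rw [image_cons_univ, himg, Finset.insert_erase hv]
      exact he
  rw [hset, Finset.card_biUnion, Finset.sum_congr rfl (fun e he => by
      refine count_inj_image m _ ?_
      rw [Finset.card_erase_of_mem (Finset.mem_filter.mp he).2,
        hcard e (Finset.mem_filter.mp he).1]; omega),
    Finset.sum_const, smul_eq_mul]
  · have hm : (m.factorial : ℝ) ≠ 0 := Nat.cast_ne_zero.mpr (Nat.factorial_ne_zero m)
    push_cast
    field_simp
  · intro e he e' he' hne'
    rw [Function.onFun, Finset.disjoint_left]
    rintro g hg hg'
    have h1 := (Finset.mem_filter.mp hg).2.2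
    have h2 := (Finset.mem_filter.mp hg').2.2
    apply hne'
    have := h1.symm.trans h2
    have hv := (Finset.mem_filter.mp he).2
    have hv' := (Finset.mem_filter.mp he').2
    rw [← Finset.insert_erase hv, ← Finset.insert_erase hv', this]
end

section
/- Every eigenvalue λ of the layered e-adjacency tensor A_H of a hypergraph H with no repeated hyperedge satisfies |λ| ≤ max(Δ, Δ*), where Δ is the maximum degree over the original vertices v_1, ..., v_n and Δ* is the maximum degree over the special vertices y_1, ..., y_{k_max - 1} in the uniformised hypergraph. -/
open Finset

private def injIntoEquiv {k : ℕ} {β : Type*} [DecidableEq β] (s : Finset β) :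
    {g : Fin k → β // Function.Injective g ∧ ∀ j, g j ∈ s} ≃ (Fin k ↪ s) where
  toFun g := ⟨fun j => ⟨g.1 j, g.2.2 j⟩, fun j j' h => g.2.1 (congrArg Subtype.val h)⟩
  invFun φ := ⟨fun j => (φ j : β), ⟨fun j j' h => φ.injective (Subtype.ext h), fun j => (φ j).2⟩⟩
  left_inv g := rfl
  right_inv φ := rfl

private lemma card_inj_into {k : ℕ} {β : Type*} [Fintype β] [DecidableEq β] (s : Finset β) :
    (Finset.univ.filter (fun g : Fin k → β => Function.Injective g ∧ ∀ j, g j ∈ s)).card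
      = s.card.descFactorial k := by
  classical
  rw [← Fintype.card_subtype]
  rw [Fintype.card_congr (injIntoEquiv (k := k) s), Fintype.card_embedding_eq,
    Fintype.card_coe, Fintype.card_fin]

/-- Every eigenvalue `λ` (in the sense of Qi) of the layered e-adjacency tensor of a
hypergraph `H` with no repeated hyperedge satisfies `|λ| ≤ max (Δ, Δ*)`, where `Δ` is
the maximum degree over the original vertices and `Δ*` the maximum degree over the
special vertices of the uniformised hypergraph. -/
theorem layered_tensor_eigenvalue_bound (n m : ℕ) (hm : 1 ≤ m)
    (E : Finset (Finset (Fin n)))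
    (hne : ∀ e ∈ E, 1 ≤ e.card) (hrange : ∀ e ∈ E, e.card ≤ m + 1)
    (Ehat : Finset (Finset (Fin n ⊕ Fin m)))
    (hEhat : Ehat = E.image (fun e =>
      e.image Sum.inl ∪
        (Finset.univ.filter (fun i : Fin m => e.card ≤ i.1 + 1)).image Sum.inr))
    (a : (Fin (m + 1) → Fin n ⊕ Fin m) → ℝ)
    (ha : ∀ i, a i =
      if Function.Injective i ∧ Finset.image i Finset.univ ∈ Ehat
      then 1 / (Nat.factorial m : ℝ) else 0)
    (Δ Δstar : ℕ)
    (hΔ : Δ = Finset.univ.sup (fun v : Fin n => (E.filter (fun e => v ∈ e)).card))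
    (hΔstar : Δstar = Finset.univ.sup
      (fun i : Fin m => (Ehat.filter (fun e => Sum.inr i ∈ e)).card))
    (lam : ℂ) (x : Fin n ⊕ Fin m → ℂ) (hx : x ≠ 0)
    (heig : ∀ v : Fin n ⊕ Fin m,
      ∑ g : Fin m → Fin n ⊕ Fin m, (a (Fin.cons v g) : ℂ) * ∏ j, x (g j) =
        lam * (x v) ^ m) :
    ‖lam‖ ≤ max (Δ : ℝ) (Δstar : ℝ) := by
  classical
  have hmfac : (0:ℝ) < (m.factorial : ℝ) := by
    exact_mod_cast Nat.factorial_pos m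
  have ha_nonneg : ∀ i, 0 ≤ a i := by
    intro i; rw [ha]; split
    · positivity
    · exact le_refl 0
  -- degree bound for every vertex
  have key3 : ∀ v : Fin n ⊕ Fin m,
      ((Ehat.filter (fun e => v ∈ e)).card : ℝ) ≤ max (Δ : ℝ) (Δstar : ℝ) := by
    rintro (w | i)
    · have h1 : (Ehat.filter (fun e => Sum.inl w ∈ e)).card ≤
          (E.filter (fun e => w ∈ e)).card := by
        rw [hEhat, Finset.filter_image]
        refine le_trans Finset.card_image_le (Finset.card_le_card ?_)
        intro e he
        simp only [Finset.mem_filter] at he ⊢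
        refine ⟨he.1, ?_⟩
        have h2 := he.2
        simp only [Finset.mem_union, Finset.mem_image] at h2
        rcases h2 with ⟨u, hu, hinl⟩ | ⟨i, _, h⟩
        · cases hinl; exact hu
        · exact absurd h (by simp)
      have h2 : (E.filter (fun e => w ∈ e)).card ≤ Δ := by
        rw [hΔ]; exact Finset.le_sup (f := fun v : Fin n => (E.filter (fun e => v ∈ e)).card) (Finset.mem_univ w)
      refine le_trans ?_ (le_max_left _ _)
      exact_mod_cast le_trans h1 h2
    · have h1 : (Ehat.filter (fun e => Sum.inr i ∈ e)).card ≤ Δstar := by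
        rw [hΔstar]; exact Finset.le_sup (f := fun i : Fin m => (Ehat.filter (fun e => Sum.inr i ∈ e)).card) (Finset.mem_univ i)
      refine le_trans ?_ (le_max_right _ _)
      exact_mod_cast h1
  -- the sum of a over cons v is at most the degree, for every v
  have key2 : ∀ v : Fin n ⊕ Fin m,
      (∑ g : Fin m → Fin n ⊕ Fin m, a (Fin.cons v g)) ≤
        ((Ehat.filter (fun e => v ∈ e)).card : ℝ) := by
    intro v
    have h1 : (∑ g : Fin m → Fin n ⊕ Fin m, a (Fin.cons v g)) =
        ∑ g : Fin m → Fin n ⊕ Fin m,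
          (if Function.Injective (Fin.cons v g) ∧
              Finset.image (Fin.cons v g) Finset.univ ∈ Ehat
           then (1 / (m.factorial : ℝ)) else 0) :=
      Finset.sum_congr rfl fun g _ => ha _
    rw [h1, Finset.sum_ite, Finset.sum_const, Finset.sum_const_zero, add_zero,
      nsmul_eq_mul, mul_one_div, div_le_iff₀ hmfac]
    have hnat : (Finset.univ.filter (fun g : Fin m → Fin n ⊕ Fin m =>
        Function.Injective (Fin.cons v g) ∧
          Finset.image (Fin.cons v g) Finset.univ ∈ Ehat)).card
        ≤ (Ehat.filter (fun e => v ∈ e)).card * m.factorial := by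
      have hsub : (Finset.univ.filter (fun g : Fin m → Fin n ⊕ Fin m =>
          Function.Injective (Fin.cons v g) ∧
            Finset.image (Fin.cons v g) Finset.univ ∈ Ehat)) ⊆
          (Ehat.filter (fun e => v ∈ e)).biUnion (fun eh =>
            Finset.univ.filter (fun g : Fin m → Fin n ⊕ Fin m =>
              Function.Injective (Fin.cons v g) ∧
                Finset.image (Fin.cons v g) Finset.univ = eh)) := by
        intro g hg
        simp only [Finset.mem_filter, Finset.mem_univ, true_and] at hg
        rw [Finset.mem_biUnion]
        refine ⟨Finset.image (Fin.cons v g) Finset.univ, ?_, ?_⟩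
        · simp only [Finset.mem_filter]
          exact ⟨hg.2, Finset.mem_image.mpr ⟨0, Finset.mem_univ _, Fin.cons_zero _ _⟩⟩
        · simp only [Finset.mem_filter, Finset.mem_univ, true_and]
          exact ⟨hg.1, trivial⟩
      refine le_trans (Finset.card_le_card hsub) ?_
      refine le_trans (Finset.card_biUnion_le) ?_
      have hblock : ∀ eh : Finset (Fin n ⊕ Fin m),
          (Finset.univ.filter (fun g : Fin m → Fin n ⊕ Fin m =>
            Function.Injective (Fin.cons v g) ∧
              Finset.image (Fin.cons v g) Finset.univ = eh)).card ≤ m.factorial := by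
        intro eh
        show (Finset.univ.filter (fun g : Fin m → Fin n ⊕ Fin m =>
            Function.Injective (Fin.cons v g) ∧
              Finset.image (Fin.cons v g) Finset.univ = eh)).card ≤ m.factorial
        by_cases hB : (Finset.univ.filter (fun g : Fin m → Fin n ⊕ Fin m =>
            Function.Injective (Fin.cons v g) ∧
              Finset.image (Fin.cons v g) Finset.univ = eh)).Nonempty
        · obtain ⟨g0, hg0⟩ := hB
          simp only [Finset.mem_filter, Finset.mem_univ, true_and] at hg0
          have hcardeh : eh.card = m + 1 := by
            rw [← hg0.2, Finset.card_image_of_injective _ hg0.1, Finset.card_univ,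
              Fintype.card_fin]
          have hveh : v ∈ eh := by
            rw [← hg0.2]
            exact Finset.mem_image.mpr ⟨0, Finset.mem_univ _, Fin.cons_zero _ _⟩
          have hcarde : (eh.erase v).card = m := by
            rw [Finset.card_erase_of_mem hveh, hcardeh]
            omega
          have hsub2 : (Finset.univ.filter (fun g : Fin m → Fin n ⊕ Fin m =>
              Function.Injective (Fin.cons v g) ∧
                Finset.image (Fin.cons v g) Finset.univ = eh)) ⊆
              Finset.univ.filter (fun g : Fin m → Fin n ⊕ Fin m =>
                Function.Injective g ∧ ∀ j, g j ∈ eh.erase v) := by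
            intro g hg
            simp only [Finset.mem_filter, Finset.mem_univ, true_and] at hg ⊢
            obtain ⟨hinj, him⟩ := hg
            refine ⟨fun j j' h => ?_, fun j => ?_⟩
            · have h' : Fin.cons (α := fun _ => Fin n ⊕ Fin m) v g j.succ = Fin.cons (α := fun _ => Fin n ⊕ Fin m) v g j'.succ := by
                simpa using h
              exact Fin.succ_injective _ (hinj h')
            · rw [Finset.mem_erase]
              constructor
              · intro hgv
                have h' : Fin.cons (α := fun _ => Fin n ⊕ Fin m) v g j.succ = Fin.cons (α := fun _ => Fin n ⊕ Fin m) v g 0 := by simp [hgv]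
                exact (Fin.succ_ne_zero j) (hinj h')
              · rw [← him]
                exact Finset.mem_image.mpr ⟨j.succ, Finset.mem_univ _, by simp⟩
          calc (Finset.univ.filter (fun g : Fin m → Fin n ⊕ Fin m =>
                  Function.Injective (Fin.cons v g) ∧
                    Finset.image (Fin.cons v g) Finset.univ = eh)).card
              ≤ (Finset.univ.filter (fun g : Fin m → Fin n ⊕ Fin m =>
                  Function.Injective g ∧ ∀ j, g j ∈ eh.erase v)).card :=
                Finset.card_le_card hsub2
            _ = (eh.erase v).card.descFactorial m := card_inj_into _
            _ = m.factorial := by rw [hcarde, Nat.descFactorial_self]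
        · rw [Finset.not_nonempty_iff_eq_empty] at hB
          simp [hB]
      refine le_trans (Finset.sum_le_sum (fun eh _ => hblock eh)) ?_
      rw [Finset.sum_const, smul_eq_mul]
    exact_mod_cast hnat
  -- pick a vertex of maximal modulus
  obtain ⟨v, -, hv⟩ := Finset.exists_max_image (Finset.univ : Finset (Fin n ⊕ Fin m))
      (fun w => ‖x w‖) ⟨Sum.inr ⟨0, hm⟩, Finset.mem_univ _⟩
  have hMmax : ∀ w, ‖x w‖ ≤ ‖x v‖ := fun w => hv w (Finset.mem_univ w)
  have hMpos : 0 < ‖x v‖ := by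
    obtain ⟨w, hw⟩ : ∃ w, x w ≠ 0 := by
      by_contra h; push_neg at h; exact hx (funext h)
    exact lt_of_lt_of_le (norm_pos_iff.mpr hw) (hMmax w)
  have step1 : ‖lam‖ ≤ ∑ g : Fin m → Fin n ⊕ Fin m, a (Fin.cons v g) := by
    have h0 : ‖lam‖ * ‖x v‖ ^ m =
        ‖∑ g : Fin m → Fin n ⊕ Fin m,
          (a (Fin.cons v g) : ℂ) * ∏ j, x (g j)‖ := by
      rw [heig v, norm_mul, norm_pow]
    have h1 : ‖∑ g : Fin m → Fin n ⊕ Fin m,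
        (a (Fin.cons v g) : ℂ) * ∏ j, x (g j)‖ ≤
        (∑ g : Fin m → Fin n ⊕ Fin m, a (Fin.cons v g)) * ‖x v‖ ^ m := by
      refine le_trans (norm_sum_le _ _) ?_
      rw [Finset.sum_mul]
      refine Finset.sum_le_sum fun g _ => ?_
      rw [norm_mul, Complex.norm_real, Real.norm_of_nonneg (ha_nonneg _), norm_prod]
      refine mul_le_mul_of_nonneg_left ?_ (ha_nonneg _)
      calc ∏ j, ‖x (g j)‖ ≤ ∏ _j : Fin m, ‖x v‖ :=
            Finset.prod_le_prod (fun j _ => norm_nonneg _) (fun j _ => hMmax _)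
        _ = ‖x v‖ ^ m := by simp
    exact le_of_mul_le_mul_right (h0.trans_le h1) (pow_pos hMpos m)
  exact le_trans step1 (le_trans (key2 v) (key3 v))
end
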